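/- Let f ∈ H² and let I be an inner function such that f·K_I is a closed subspace of H². If f(0) ≠ 0, then f·K_I is a nearly S*-invariant subspace. If f(0) = 0, then f·K_I is both (i) of the form zⁿ·N for some n ≥ 1 and some nearly S*-invariant subspace N ⊆ H², and (ii) nearly S*-invariant with the one-dimensional defect space (f/z)·(K_I ⊖ (K_I ∩ zH²)). -/

import Mathlib

open MeasureTheory Complex Real
open scoped ENNReal ComplexConjugate

noncomputable section

namespace Paper

instance : Fact (0 < 2 * Real.pi) := ⟨by positivity⟩

abbrev Tc : Type := AddCircle (2 * Real.pi)
abbrev μ0 : MeasureTheory.Measure Tc := AddCircle.haarAddCircle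
abbrev L2 : Type := MeasureTheory.Lp ℂ 2 μ0

def coeffCLM (n : ℤ) : L2 →L[ℂ] ℂ :=
  LinearMap.mkContinuous
    { toFun := fun f => fourierBasis.repr f n
      map_add' := fun f g => by simp
      map_smul' := fun c f => by simp }
    1
    (fun f => by
      have h := lp.norm_apply_le_norm (p := 2) (by norm_num) (fourierBasis.repr f) n
      simpa using h)

def cf (f : L2) (n : ℤ) : ℂ := coeffCLM n f

/-- The subspace of `L²(𝕋)` of functions whose Fourier coefficients of index `< k` vanish.
Thus `coeffGE 0 = H²` and `coeffGE k = zᵏH²` for `k ≥ 0`. -/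
def coeffGE (k : ℤ) : Submodule ℂ L2 :=
  ⨅ (n : ℤ) (_ : n < k), LinearMap.ker (coeffCLM n : L2 →ₗ[ℂ] ℂ)

/-- The subspace of `L²(𝕋)` of functions whose Fourier coefficients of index `≥ k` vanish.
Thus `coeffLT 0 = conj (H²₀) = (H²)^⊥`. -/
def coeffLT (k : ℤ) : Submodule ℂ L2 :=
  ⨅ (n : ℤ) (_ : k ≤ n), LinearMap.ker (coeffCLM n : L2 →ₗ[ℂ] ℂ)

/-- The Hardy space `H²` of the unit disc, viewed as a subspace of `L²(𝕋)`. -/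
def H2 : Submodule ℂ L2 := coeffGE 0

lemma mem_coeffGE {k : ℤ} {f : L2} : f ∈ coeffGE k ↔ ∀ n < k, cf f n = 0 := by
  simp [coeffGE, cf, Submodule.mem_iInf, LinearMap.mem_ker]

lemma isClosed_coeffGE (k : ℤ) : IsClosed ((coeffGE k : Submodule ℂ L2) : Set L2) := by
  have h : ((coeffGE k : Submodule ℂ L2) : Set L2)
      = ⋂ (n : ℤ) (_ : n < k), (LinearMap.ker (coeffCLM n : L2 →ₗ[ℂ] ℂ) : Set L2) := by
    ext f
    simp [coeffGE, Submodule.mem_iInf, Set.mem_iInter]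
  rw [h]
  exact isClosed_iInter fun n => isClosed_iInter fun _ => ContinuousLinearMap.isClosed_ker (coeffCLM n)

end Paper
namespace Paper

open scoped Classical in
/-- Multiplication by an `L^∞` function, as a linear map on `L²(𝕋)` (defined to be `0` if the
symbol is not essentially bounded). -/
def mulLM (g : Tc → ℂ) : L2 →ₗ[ℂ] L2 :=
  if hg : MemLp g ⊤ μ0 then
    { toFun := fun f => ((Lp.memLp f).smul (r := 2) hg).toLp (g • ⇑f)
      map_add' := fun f₁ f₂ => by
        apply Lp.ext
        filter_upwards [MemLp.coeFn_toLp ((Lp.memLp (f₁ + f₂)).smul (r := 2) hg),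
          MemLp.coeFn_toLp ((Lp.memLp f₁).smul (r := 2) hg),
          MemLp.coeFn_toLp ((Lp.memLp f₂).smul (r := 2) hg),
          Lp.coeFn_add f₁ f₂,
          Lp.coeFn_add (((Lp.memLp f₁).smul (r := 2) hg).toLp (g • ⇑f₁))
            (((Lp.memLp f₂).smul (r := 2) hg).toLp (g • ⇑f₂))] with x h0 h1 h2 h3 h4
        rw [h0, h4, Pi.add_apply, h1, h2]
        simp only [Pi.smul_apply', Pi.add_apply, h3, smul_add]
      map_smul' := fun c f => by
        apply Lp.ext
        filter_upwards [MemLp.coeFn_toLp ((Lp.memLp (c • f)).smul (r := 2) hg),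
          MemLp.coeFn_toLp ((Lp.memLp f).smul (r := 2) hg),
          Lp.coeFn_smul c f,
          Lp.coeFn_smul c (((Lp.memLp f).smul (r := 2) hg).toLp (g • ⇑f))] with x h0 h1 h3 h4
        simp only [RingHom.id_apply]
        rw [h0, h4, Pi.smul_apply, h1]
        simp only [Pi.smul_apply', Pi.smul_apply, h3]
        exact smul_comm _ _ _ }
  else 0

end Paper
namespace Paper

/-- The orthogonal projection of `L²(𝕋)` onto a closed subspace, as a map `L² → L²`. -/
def projCLM (U : Submodule ℂ L2) (hU : IsClosed (U : Set L2)) : L2 →L[ℂ] L2 :=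
  letI : CompleteSpace U := hU.completeSpace_coe
  U.subtypeL.comp U.orthogonalProjectionOnto

/-- The subspace `θH²` of `L²(𝕋)`. -/
def thetaH2 (θ : Tc → ℂ) : Submodule ℂ L2 := H2.map (mulLM θ)

/-- The model space `K_θ = H² ⊖ θH²`. -/
def Kmod (θ : Tc → ℂ) : Submodule ℂ L2 := H2 ⊓ (thetaH2 θ)ᗮ

lemma isClosed_Kmod (θ : Tc → ℂ) : IsClosed ((Kmod θ : Submodule ℂ L2) : Set L2) :=
  (isClosed_coeffGE 0).inter (thetaH2 θ).isClosed_orthogonal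

/-- The orthogonal projection `P_θ : L² → K_θ` (composed with the inclusion back into `L²`). -/
def Ptheta (θ : Tc → ℂ) : L2 →L[ℂ] L2 := projCLM (Kmod θ) (isClosed_Kmod θ)

/-- The orthogonal projection `P₊ : L² → H²`. -/
def Pplus : L2 →L[ℂ] L2 := projCLM H2 (isClosed_coeffGE 0)

/-- The independent variable `z = e^{it}`, as a function on the circle. -/
def zf : Tc → ℂ := fun x => fourier 1 x

/-- The conjugate variable `z̄ = e^{-it}`. -/
def zbar : Tc → ℂ := fun x => fourier (-1) x

lemma memLp_fourier (n : ℤ) : MemLp (fun x : Tc => (fourier n x : ℂ)) ⊤ μ0 := by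
  refine memLp_top_of_bound ((fourier n).continuous.aestronglyMeasurable) 1 ?_
  exact Filter.Eventually.of_forall fun x => le_of_eq (Circle.norm_coe _)

lemma memLp_zf : MemLp zf ⊤ μ0 := memLp_fourier 1

lemma memLp_zbar : MemLp zbar ⊤ μ0 := memLp_fourier (-1)

/-- The backward shift `S* : f ↦ (f - f(0))/z`, realised on `L²(𝕋)` as
`f ↦ P₊(z̄ f)`; on `H²` this is the usual backward shift. -/
def Sstar : L2 →ₗ[ℂ] L2 := (Pplus : L2 →ₗ[ℂ] L2).comp (mulLM zbar)

/-- `θ` is an inner function: it is essentially bounded, unimodular a.e. on the circle, and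
all its negative Fourier coefficients vanish (i.e. it is the boundary function of a bounded
analytic function on the disc). -/
structure IsInner (θ : Tc → ℂ) : Prop where
  memLinf : MemLp θ ⊤ μ0
  unimodular : ∀ᵐ x ∂μ0, ‖θ x‖ = 1
  analytic : ∀ n : ℤ, n < 0 → fourierCoeff θ n = 0

/-- Pointwise complex conjugation of a function on the circle. -/
def conjFun (f : Tc → ℂ) : Tc → ℂ := fun x => (starRingEnd ℂ) (f x)

lemma memLp_conj {f : Tc → ℂ} {p : ℝ≥0∞} (hf : MemLp f p μ0) : MemLp (conjFun f) p μ0 := by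
  refine ⟨continuous_star.comp_aestronglyMeasurable hf.1, ?_⟩
  have h : eLpNorm (conjFun f) p μ0 = eLpNorm f p μ0 :=
    eLpNorm_congr_norm_ae (Filter.Eventually.of_forall fun x => by
      simp [conjFun])
  rw [h]
  exact hf.2

/-- Complex conjugation on `L²(𝕋)`. -/
def conjL2 (f : L2) : L2 := (memLp_conj (Lp.memLp f)).toLp (conjFun ⇑f)

end Paper
namespace Paper

/-- The set `w·U = {h ∈ L² : h = w·k (a.e.) for some k ∈ U}`, for a fixed function `w` on the
circle and a subspace `U ⊆ L²`; this is a (not necessarily closed) subspace of `L²`. -/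
def mulSet (w : Tc → ℂ) (U : Submodule ℂ L2) : Submodule ℂ L2 where
  carrier := {h : L2 | ∃ k ∈ U, (⇑h : Tc → ℂ) =ᵐ[μ0] fun x => w x * (⇑k : Tc → ℂ) x}
  add_mem' := by
    rintro a b ⟨k₁, hk₁, ha⟩ ⟨k₂, hk₂, hb⟩
    refine ⟨k₁ + k₂, U.add_mem hk₁ hk₂, ?_⟩
    filter_upwards [ha, hb, Lp.coeFn_add a b, Lp.coeFn_add k₁ k₂] with x h1 h2 h3 h4
    simp only [h3, Pi.add_apply, h1, h2, h4, mul_add]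
  zero_mem' := by
    refine ⟨0, U.zero_mem, ?_⟩
    filter_upwards [Lp.coeFn_zero ℂ 2 μ0] with x h1
    simp [h1]
  smul_mem' := by
    rintro c a ⟨k, hk, ha⟩
    refine ⟨c • k, U.smul_mem c hk, ?_⟩
    filter_upwards [ha, Lp.coeFn_smul c a, Lp.coeFn_smul c k] with x h1 h2 h3
    simp only [h2, Pi.smul_apply, h1, h3, smul_eq_mul]
    ring

/-- `f` is an outer function: `f ∈ H²` and the polynomial multiples of `f` are dense in `H²`
(i.e. `f` is cyclic for the forward shift). -/
def IsOuter (f : L2) : Prop :=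
  f ∈ H2 ∧
    (Submodule.span ℂ (Set.range fun k : ℕ => ((mulLM zf) ^ k) f)).topologicalClosure = H2

/-- `h` is a cyclic vector for the backward shift `S*` on `H²`. -/
def CyclicSstar (h : L2) : Prop :=
  (Submodule.span ℂ (Set.range fun k : ℕ => (Sstar ^ k) h)).topologicalClosure = H2

/-- `d` divides `u` in the sense of inner functions. -/
def InnerDvd (d u : Tc → ℂ) : Prop :=
  ∃ v : Tc → ℂ, IsInner v ∧ ∀ᵐ x ∂μ0, u x = d x * v x

/-- Two inner functions have greatest common inner divisor `1`, i.e. every common inner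
divisor is a (necessarily unimodular) constant. -/
def CoprimeInner (u₁ u₂ : Tc → ℂ) : Prop :=
  ∀ d : Tc → ℂ, IsInner d → InnerDvd d u₁ → InnerDvd d u₂ → ∃ c : ℂ, ∀ᵐ x ∂μ0, d x = c

/-- The kernel of the truncated Toeplitz operator `A_g^θ = P_θ (g ·) : K_θ → K_θ`:
`f ∈ ker A_g^θ` iff `f ∈ K_θ` and `g f ⊥ K_θ`. -/
def kerA (θ g : Tc → ℂ) : Submodule ℂ L2 :=
  Kmod θ ⊓ ((Kmod θ)ᗮ).comap (mulLM g)

/-- The kernel of the dual truncated Toeplitz operator `D_g^θ = Q (g ·) : K_θ^⊥ → K_θ^⊥`: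
`f ∈ ker D_g^θ` iff `f ∈ K_θ^⊥` and `g f ⊥ K_θ^⊥`. -/
def kerD (θ g : Tc → ℂ) : Submodule ℂ L2 :=
  (Kmod θ)ᗮ ⊓ (((Kmod θ)ᗮ)ᗮ).comap (mulLM g)

/-- The space `A = {f ∈ ker D_g^θ : gf ∈ K_θ ∩ zH²}`. -/
def dualA (θ g : Tc → ℂ) : Submodule ℂ L2 :=
  kerD θ g ⊓ (Kmod θ ⊓ coeffGE 1).comap (mulLM g)

/-- The space `C = ker D_g^θ ∩ (conj H²₀ ⊕ θzH²) ∩ A`. -/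
def dualC (θ g : Tc → ℂ) : Submodule ℂ L2 :=
  kerD θ g ⊓ (coeffLT 0 ⊔ (coeffGE 1).map (mulLM θ)) ⊓ dualA θ g

end Paper
namespace Paper

/-- The vector-valued space `L²(𝕋, ℂⁿ)`, realised as an `ℓ²`-direct sum of `n` copies of
`L²(𝕋)`; the subspace `H2v n` below is the vector-valued Hardy space `H²(𝔻, ℂⁿ)`. -/
abbrev Vec (n : ℕ) : Type := PiLp 2 (fun _ : Fin n => L2)

/-- The `i`-th component, as a linear map `L²(𝕋, ℂⁿ) → L²(𝕋)`. -/
def compLM {n : ℕ} (i : Fin n) : Vec n →ₗ[ℂ] L2 where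
  toFun F := F i
  map_add' F G := rfl
  map_smul' c F := rfl

/-- Vector-valued analogue of `coeffGE`: `coeffGEv n 0 = H²(𝔻, ℂⁿ)` and
`coeffGEv n 1 = zH²(𝔻, ℂⁿ)`. -/
def coeffGEv (n : ℕ) (k : ℤ) : Submodule ℂ (Vec n) :=
  ⨅ i : Fin n, (coeffGE k).comap (compLM i)

/-- The vector-valued Hardy space `H²(𝔻, ℂⁿ)`. -/
def H2v (n : ℕ) : Submodule ℂ (Vec n) := coeffGEv n 0

/-- The vector-valued model space `K_θ(𝔻, ℂⁿ)` (all components in `K_θ`). -/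
def Kv (θ : Tc → ℂ) (n : ℕ) : Submodule ℂ (Vec n) :=
  ⨅ i : Fin n, (Kmod θ).comap (compLM i)

/-- Evaluation at the origin, `F ↦ F(0)`, for (Hardy-space) elements of `L²(𝕋, ℂⁿ)`. -/
def ev0 {n : ℕ} (F : Vec n) : EuclideanSpace ℂ (Fin n) := WithLp.toLp 2 (fun i => cf (F i) 0)

/-- Evaluation at the origin as a linear map `H²(𝔻, ℂⁿ) → ℂⁿ`. -/
def ev0LM (n : ℕ) : Vec n →ₗ[ℂ] EuclideanSpace ℂ (Fin n) where
  toFun := ev0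
  map_add' _F _G := by
    ext i
    simp [ev0, cf]
  map_smul' _c _F := by
    ext i
    simp [ev0, cf]

/-- The componentwise backward shift on `L²(𝕋, ℂⁿ)`. -/
def SstarV {n : ℕ} : Vec n →ₗ[ℂ] Vec n where
  toFun F := WithLp.toLp 2 (fun i => Sstar (F i))
  map_add' _F _G := by
    ext i
    simp
  map_smul' _c _F := by
    ext i
    simp

/-- Componentwise multiplication by a scalar `L^∞` function on `L²(𝕋, ℂⁿ)`. -/
def mulVLM (g : Tc → ℂ) {n : ℕ} : Vec n →ₗ[ℂ] Vec n where
  toFun F := WithLp.toLp 2 (fun i => mulLM g (F i))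
  map_add' _F _G := by
    ext i
    simp
  map_smul' _c _F := by
    ext i
    simp

/-- The projection onto the first `i` coordinates, `P_i : H²(𝔻, ℂⁿ) → H²(𝔻, ℂⁱ)`. -/
def projLE {n i : ℕ} (h : i ≤ n) : Vec n →ₗ[ℂ] Vec i where
  toFun F := WithLp.toLp 2 (fun j => F (Fin.castLE h j))
  map_add' F G := rfl
  map_smul' c F := rfl

/-- The `i`-th row of a matrix symbol applied to a vector function:
`F ↦ ∑ j, G i j • F j`. -/
def rowLM {n : ℕ} (G : Matrix (Fin n) (Fin n) (Tc → ℂ)) (i : Fin n) : Vec n →ₗ[ℂ] L2 :=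
  ∑ j : Fin n, (mulLM (G i j)).comp (compLM j)

/-- The kernel of the block Toeplitz operator `T_G = P₊(G ·)` on `H²(𝔻, ℂⁿ)`:
`F ∈ ker T_G` iff `F ∈ H²(𝔻, ℂⁿ)` and every component of `GF` is orthogonal to `H²`. -/
def kerT {n : ℕ} (G : Matrix (Fin n) (Fin n) (Tc → ℂ)) : Submodule ℂ (Vec n) :=
  H2v n ⊓ ⨅ i : Fin n, (H2ᗮ).comap (rowLM G i)

/-- The kernel of the matrix truncated Toeplitz operator `A_G^θ = P_θ(G ·)` on `K_θ(𝔻, ℂ²)`. -/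
def kerAv (θ : Tc → ℂ) (G : Matrix (Fin 2) (Fin 2) (Tc → ℂ)) : Submodule ℂ (Vec 2) :=
  Kv θ 2 ⊓ ⨅ i : Fin 2, ((Kmod θ)ᗮ).comap (rowLM G i)

/-- The scalar-type space `w·U ⊆ L²(𝕋, ℂⁿ)`, for a fixed vector function `w` and a
subspace `U ⊆ L²(𝕋)` of scalar functions. -/
def vecMulSet {n : ℕ} (w : Vec n) (U : Submodule ℂ L2) : Submodule ℂ (Vec n) where
  carrier := {F | ∃ k ∈ U, ∀ i : Fin n,
    (⇑(F i) : Tc → ℂ) =ᵐ[μ0] fun x => (⇑(w i) : Tc → ℂ) x * (⇑k : Tc → ℂ) x}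
  add_mem' := by
    rintro a b ⟨k₁, hk₁, ha⟩ ⟨k₂, hk₂, hb⟩
    refine ⟨k₁ + k₂, U.add_mem hk₁ hk₂, fun i => ?_⟩
    have hab : (a + b) i = a i + b i := rfl
    rw [hab]
    filter_upwards [ha i, hb i, Lp.coeFn_add (a i) (b i), Lp.coeFn_add k₁ k₂]
      with x h1 h2 h3 h4
    simp only [h3, Pi.add_apply, h1, h2, h4, mul_add]
  zero_mem' := by
    refine ⟨0, U.zero_mem, fun i => ?_⟩
    have h0 : (0 : Vec n) i = 0 := rfl
    rw [h0]
    filter_upwards [Lp.coeFn_zero ℂ 2 μ0] with x h1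
    simp [h1]
  smul_mem' := by
    rintro c a ⟨k, hk, ha⟩
    refine ⟨c • k, U.smul_mem c hk, fun i => ?_⟩
    have hc : (c • a) i = c • (a i) := rfl
    rw [hc]
    filter_upwards [ha i, Lp.coeFn_smul c (a i), Lp.coeFn_smul c k] with x h1 h2 h3
    simp only [h2, Pi.smul_apply, h1, h3, smul_eq_mul]
    ring

end Paper
namespace Paper

/-- The representation `F = F₀ k₀ + z ∑ⱼ kⱼ eⱼ` of Theorem 3.4(1): here the columns of `F₀`
are `W 0, …, W (r-1)`, the `eⱼ` are an orthonormal basis of the defect space, and the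
parameter `k = (k₀, k₁, …, k_m)` runs through a subspace of `H²(𝔻, ℂ^{r+m})`. -/
def rep1 {n r m : ℕ} (W : Fin r → Vec n) (e : Fin m → Vec n) (k : Vec (r + m)) (F : Vec n) :
    Prop :=
  ∀ i : Fin n,
    (⇑(F i) : Tc → ℂ) =ᵐ[μ0] fun x =>
      (∑ j : Fin r, (⇑(k (Fin.castAdd m j)) : Tc → ℂ) x * (⇑(W j i) : Tc → ℂ) x) +
        zf x * ∑ j : Fin m, (⇑(k (Fin.natAdd r j)) : Tc → ℂ) x * (⇑(e j i) : Tc → ℂ) x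

/-- The representation `F = z ∑ⱼ kⱼ eⱼ` of Theorem 3.4(2). -/
def rep2 {n m : ℕ} (e : Fin m → Vec n) (k : Vec m) (F : Vec n) : Prop :=
  ∀ i : Fin n,
    (⇑(F i) : Tc → ℂ) =ᵐ[μ0] fun x =>
      zf x * ∑ j : Fin m, (⇑(k j) : Tc → ℂ) x * (⇑(e j i) : Tc → ℂ) x

end Paper
namespace Paper

lemma cf_eq_fourierCoeff (f : L2) (n : ℤ) : cf f n = fourierCoeff (⇑f) n := by
  have : cf f n = fourierBasis.repr f n := rfl
  rw [this, fourierBasis_repr]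

lemma fourierCoeff_congr_ae {f g : Tc → ℂ} (h : f =ᵐ[μ0] g) (n : ℤ) :
    fourierCoeff f n = fourierCoeff g n :=
  integral_congr_ae (h.mono fun x hx => by dsimp only; rw [hx])

lemma cf_congr_ae {f : L2} {g : Tc → ℂ} (h : (⇑f : Tc → ℂ) =ᵐ[μ0] g) (n : ℤ) :
    cf f n = fourierCoeff g n := by
  rw [cf_eq_fourierCoeff]; exact fourierCoeff_congr_ae h n

lemma cf_add (f g : L2) (n : ℤ) : cf (f + g) n = cf f n + cf g n := map_add (coeffCLM n) f g
lemma cf_sub (f g : L2) (n : ℤ) : cf (f - g) n = cf f n - cf g n := map_sub (coeffCLM n) f g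
lemma cf_smul (c : ℂ) (f : L2) (n : ℤ) : cf (c • f) n = c * cf f n := map_smul (coeffCLM n) c f

lemma cf_eq_zero_all {f : L2} (h : ∀ n, cf f n = 0) : f = 0 := by
  have : fourierBasis.repr f = 0 := by
    ext n
    have h' : fourierBasis.repr f n = 0 := h n
    simpa using h'
  simpa using (map_eq_zero_iff _ fourierBasis.repr.injective).mp this

lemma mulLM_coeFn (g : Tc → ℂ) (hg : MemLp g ⊤ μ0) (u : L2) :
    (⇑(mulLM g u) : Tc → ℂ) =ᵐ[μ0] fun x => g x * u x := by
  rw [mulLM, dif_pos hg]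
  exact (MemLp.coeFn_toLp ((Lp.memLp u).smul (r := 2) hg)).trans
    (Filter.Eventually.of_forall fun x => rfl)

lemma mem_mulSet {w : Tc → ℂ} {U : Submodule ℂ L2} {h : L2} :
    h ∈ mulSet w U ↔ ∃ k ∈ U, (⇑h : Tc → ℂ) =ᵐ[μ0] fun x => w x * k x := Iff.rfl

lemma mem_H2_iff {f : L2} : f ∈ H2 ↔ ∀ n < (0:ℤ), cf f n = 0 := mem_coeffGE

lemma cf_mulLM_fourier (m : ℤ) (u : L2) (j : ℤ) :
    cf (mulLM (fun x => fourier m x) u) j = cf u (j - m) := by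
  rw [cf_congr_ae (mulLM_coeFn _ (memLp_fourier m) u), cf_eq_fourierCoeff]
  unfold fourierCoeff
  refine integral_congr_ae (Filter.Eventually.of_forall fun x => ?_)
  dsimp only
  rw [smul_eq_mul, smul_eq_mul, ← mul_assoc, ← fourier_add]
  have hidx : -j + m = -(j - m) := by ring
  rw [hidx]

lemma cf_mulLM_zbar (u : L2) (j : ℤ) : cf (mulLM zbar u) j = cf u (j + 1) := by
  have : zbar = fun x => fourier (-1) x := rfl
  rw [this, cf_mulLM_fourier]
  norm_num

lemma cf_mulLM_zf (u : L2) (j : ℤ) : cf (mulLM zf u) j = cf u (j - 1) := by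
  have : zf = fun x => fourier (1 : ℤ) x := rfl
  rw [this, cf_mulLM_fourier]

lemma mulLM_zf_zbar (u : L2) : mulLM zf (mulLM zbar u) = u := by
  apply Lp.ext
  filter_upwards [mulLM_coeFn zf memLp_zf (mulLM zbar u), mulLM_coeFn zbar memLp_zbar u]
    with x h1 h2
  rw [h1, h2]
  show fourier 1 x * (fourier (-1) x * u x) = u x
  rw [← mul_assoc, ← fourier_add]
  norm_num

lemma mulLM_zbar_zf (u : L2) : mulLM zbar (mulLM zf u) = u := by
  apply Lp.ext
  filter_upwards [mulLM_coeFn zbar memLp_zbar (mulLM zf u), mulLM_coeFn zf memLp_zf u]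
    with x h1 h2
  rw [h1, h2]
  show fourier (-1) x * (fourier 1 x * u x) = u x
  rw [← mul_assoc, ← fourier_add]
  norm_num

lemma pow_zf_zbar (n : ℕ) (u : L2) : (mulLM zf ^ n) ((mulLM zbar ^ n) u) = u := by
  induction n generalizing u with
  | zero => simp
  | succ n ih =>
    rw [pow_succ (mulLM zf), pow_succ' (mulLM zbar)]
    simp only [Module.End.mul_apply]
    rw [mulLM_zf_zbar, ih]

lemma pow_zbar_zf (n : ℕ) (u : L2) : (mulLM zbar ^ n) ((mulLM zf ^ n) u) = u := by
  induction n generalizing u with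
  | zero => simp
  | succ n ih =>
    rw [pow_succ (mulLM zbar), pow_succ' (mulLM zf)]
    simp only [Module.End.mul_apply]
    rw [mulLM_zbar_zf, ih]

lemma coeFn_pow_zbar (n : ℕ) (u : L2) :
    (⇑((mulLM zbar ^ n) u) : Tc → ℂ) =ᵐ[μ0] fun x => fourier (-(n:ℤ)) x * u x := by
  induction n with
  | zero =>
    simp only [pow_zero, Module.End.one_apply]
    refine Filter.Eventually.of_forall fun x => ?_
    norm_num
  | succ n ih =>
    rw [pow_succ' (mulLM zbar)]
    simp only [Module.End.mul_apply]
    filter_upwards [mulLM_coeFn zbar memLp_zbar ((mulLM zbar ^ n) u), ih] with x h1 h2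
    rw [h1, h2]
    show fourier (-1) x * (fourier (-(n:ℤ)) x * u x) = fourier (-((n:ℕ)+1:ℕ):ℤ) x * u x
    rw [← mul_assoc, ← fourier_add]
    have hidx : (-1) + -(n:ℤ) = (-((n:ℕ)+1:ℕ):ℤ) := by push_cast; ring
    rw [hidx]

lemma coeFn_pow_zf (n : ℕ) (u : L2) :
    (⇑((mulLM zf ^ n) u) : Tc → ℂ) =ᵐ[μ0] fun x => fourier (n:ℤ) x * u x := by
  induction n with
  | zero =>
    simp only [pow_zero, Module.End.one_apply]
    refine Filter.Eventually.of_forall fun x => ?_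
    norm_num
  | succ n ih =>
    rw [pow_succ' (mulLM zf)]
    simp only [Module.End.mul_apply]
    filter_upwards [mulLM_coeFn zf memLp_zf ((mulLM zf ^ n) u), ih] with x h1 h2
    rw [h1, h2]
    show fourier 1 x * (fourier (n:ℤ) x * u x) = fourier (((n:ℕ)+1:ℕ):ℤ) x * u x
    rw [← mul_assoc, ← fourier_add]
    have hidx : (1:ℤ) + (n:ℤ) = (((n:ℕ)+1:ℕ):ℤ) := by push_cast; ring
    rw [hidx]

lemma cf_pow_zbar (n : ℕ) (u : L2) (j : ℤ) : cf ((mulLM zbar ^ n) u) j = cf u (j + n) := by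
  induction n generalizing j with
  | zero => simp
  | succ n ih =>
    rw [pow_succ' (mulLM zbar)]
    simp only [Module.End.mul_apply]
    rw [cf_mulLM_zbar, ih]
    congr 1
    push_cast
    ring

lemma cf_pow_zf (n : ℕ) (u : L2) (j : ℤ) : cf ((mulLM zf ^ n) u) j = cf u (j - n) := by
  induction n generalizing j with
  | zero => simp
  | succ n ih =>
    rw [pow_succ' (mulLM zf)]
    simp only [Module.End.mul_apply]
    rw [cf_mulLM_zf, ih]
    congr 1
    push_cast
    ring

lemma continuous_mulLM (g : Tc → ℂ) (hg : MemLp g ⊤ μ0) (hb : ∀ᵐ x ∂μ0, ‖g x‖ ≤ 1) :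
    Continuous (mulLM g) := by
  refine AddMonoidHomClass.continuous_of_bound (mulLM g) 1 fun u => ?_
  rw [one_mul]
  have h1 : (⇑(mulLM g u) : Tc → ℂ) =ᵐ[μ0] fun x => g x * u x := mulLM_coeFn g hg u
  rw [Lp.norm_def, Lp.norm_def]
  refine ENNReal.toReal_mono (Lp.eLpNorm_ne_top u) ?_
  rw [eLpNorm_congr_ae h1]
  refine eLpNorm_mono_ae ?_
  filter_upwards [hb] with x hx
  rw [norm_mul]
  nlinarith [norm_nonneg (g x), norm_nonneg ((u : Tc → ℂ) x)]

lemma continuous_pow_zf (n : ℕ) : Continuous fun u : L2 => (mulLM zf ^ n) u := by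
  induction n with
  | zero =>
    simp only [pow_zero, Module.End.one_apply]
    exact continuous_id
  | succ n ih =>
    have hc : Continuous (mulLM zf) := by
      refine continuous_mulLM zf memLp_zf (Filter.Eventually.of_forall fun x => ?_)
      show ‖(fourier 1 x : ℂ)‖ ≤ 1
      rw [fourier_apply, Circle.norm_coe]
    rw [pow_succ (mulLM zf)]
    simp only [Module.End.mul_apply]
    exact ih.comp hc

lemma coeFn_conjL2 (f : L2) : (⇑(conjL2 f) : Tc → ℂ) =ᵐ[μ0] fun x => conj (f x) :=
  MemLp.coeFn_toLp _

lemma inner_L2 (a b : L2) : (inner ℂ a b : ℂ) = ∫ x, conj (a x) * b x ∂μ0 := by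
  rw [MeasureTheory.L2.inner_def]
  refine integral_congr_ae (Filter.Eventually.of_forall fun x => ?_)
  simp [RCLike.inner_apply']
  ring

lemma hasSum_conv {u v w : L2} (hw : (⇑w : Tc → ℂ) =ᵐ[μ0] fun x => u x * v x) (j : ℤ) :
    HasSum (fun i : ℤ => cf u (j - i) * cf v i) (cf w j) := by
  set x := conjL2 (mulLM (fun t => fourier (-j) t) u) with hxdef
  have hxcoe : (⇑x : Tc → ℂ) =ᵐ[μ0] fun t => conj (fourier (-j) t * u t) := by
    filter_upwards [coeFn_conjL2 (mulLM (fun t => fourier (-j) t) u),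
      mulLM_coeFn (fun t => fourier (-j) t) (memLp_fourier (-j)) u] with t h1 h2
    rw [h1, h2]
  have key := fourierBasis.hasSum_inner_mul_inner x v
  have h1 : (inner ℂ x v : ℂ) = cf w j := by
    rw [inner_L2, cf_eq_fourierCoeff]
    unfold fourierCoeff
    refine integral_congr_ae ?_
    filter_upwards [hxcoe, hw] with t h1 h2
    rw [h1]
    simp only [smul_eq_mul, map_mul, Complex.conj_conj]
    rw [h2]
    ring
  have h2 : ∀ i : ℤ, (inner ℂ x (fourierBasis i) : ℂ) * (inner ℂ (fourierBasis i) v : ℂ)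
      = cf u (j - i) * cf v i := by
    intro i
    have hbv : (inner ℂ (fourierBasis i) v : ℂ) = cf v i := by
      rw [← fourierBasis.repr_apply_apply v i]; rfl
    have hcx : cf x i = conj (cf u (j - i)) := by
      rw [cf_congr_ae hxcoe, cf_eq_fourierCoeff]
      unfold fourierCoeff
      rw [← integral_conj]
      refine integral_congr_ae (Filter.Eventually.of_forall fun t => ?_)
      show fourier (-i) t • conj (fourier (-j) t * u t) = conj (fourier (-(j - i)) t • u t)
      rw [smul_eq_mul, smul_eq_mul, fourier_neg (n := i), ← map_mul]
      congr 1
      rw [← mul_assoc, ← fourier_add]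
      have hidx : i + -j = -(j - i) := by ring
      rw [hidx]
    have hxb : (inner ℂ x (fourierBasis i) : ℂ) = cf u (j - i) := by
      have hh : (inner ℂ (fourierBasis i) x : ℂ) = cf x i := by
        rw [← fourierBasis.repr_apply_apply x i]; rfl
      rw [← inner_conj_symm, hh, hcx, Complex.conj_conj]
    rw [hxb, hbv]
  rw [← h1]
  exact key.congr_fun fun i => (h2 i).symm

lemma cf_mul_eq_zero {u v w : L2} {N : ℤ} (hv : v ∈ H2)
    (hu : ∀ i < N, cf u i = 0)
    (hw : (⇑w : Tc → ℂ) =ᵐ[μ0] fun x => u x * v x) {j : ℤ} (hj : j < N) :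
    cf w j = 0 := by
  have h := hasSum_conv hw j
  have hz : (fun i : ℤ => cf u (j - i) * cf v i) = fun _ => (0:ℂ) := by
    funext i
    rcases lt_or_ge i 0 with hi | hi
    · rw [mem_H2_iff.mp hv i hi, mul_zero]
    · rw [hu (j - i) (by omega), zero_mul]
  rw [hz] at h
  exact (hasSum_zero.unique h).symm

lemma cf_mul_head {u v w : L2} {N : ℤ} (hv : v ∈ H2)
    (hu : ∀ i < N, cf u i = 0)
    (hw : (⇑w : Tc → ℂ) =ᵐ[μ0] fun x => u x * v x) :
    cf w N = cf u N * cf v 0 := by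
  have h := hasSum_conv hw N
  have h0 : HasSum (fun i : ℤ => cf u (N - i) * cf v i) (cf u (N - 0) * cf v 0) := by
    refine hasSum_single 0 fun i hi => ?_
    rcases lt_or_ge i 0 with h' | h'
    · rw [mem_H2_iff.mp hv i h', mul_zero]
    · have : N - i < N := by omega
      rw [hu _ this, zero_mul]
  have := h.unique h0
  simpa using this

lemma mem_H2_of_mul {u v w : L2} (hu : u ∈ H2) (hv : v ∈ H2)
    (hw : (⇑w : Tc → ℂ) =ᵐ[μ0] fun x => u x * v x) : w ∈ H2 :=
  mem_H2_iff.mpr fun n hn => cf_mul_eq_zero hv (fun i hi => mem_H2_iff.mp hu i hi) hw hn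

lemma Pplus_eq_self {v : L2} (hv : v ∈ H2) : Pplus v = v := by
  haveI : CompleteSpace H2 := (isClosed_coeffGE 0).completeSpace_coe
  exact Submodule.starProjection_eq_self_iff.mpr hv

lemma Sstar_eq_zbar {h : L2} (hH : h ∈ H2) (h0 : cf h 0 = 0) : Sstar h = mulLM zbar h := by
  have hmem : mulLM zbar h ∈ H2 := by
    rw [H2, mem_coeffGE]
    intro n hn
    rw [cf_mulLM_zbar]
    rcases lt_or_eq_of_le (by omega : n + 1 ≤ 0) with h' | h'
    · exact mem_H2_iff.mp hH _ h'
    · rw [h']; exact h0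
  show Pplus (mulLM zbar h) = mulLM zbar h
  exact Pplus_eq_self hmem

lemma zbar_mem_H2 {h : L2} (hH : h ∈ H2) (h0 : cf h 0 = 0) : mulLM zbar h ∈ H2 := by
  rw [H2, mem_coeffGE]
  intro n hn
  rw [cf_mulLM_zbar]
  rcases lt_or_eq_of_le (by omega : n + 1 ≤ 0) with h' | h'
  · exact mem_H2_iff.mp hH _ h'
  · rw [h']; exact h0

lemma zf_mem_H2 {h : L2} (hH : h ∈ H2) : mulLM zf h ∈ H2 := by
  rw [H2, mem_coeffGE]
  intro n hn
  rw [cf_mulLM_zf]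
  exact mem_H2_iff.mp hH _ (by omega)

lemma Kmod_shift {I : Tc → ℂ} (hI : IsInner I) {k : L2} (hk : k ∈ Kmod I) (hk0 : cf k 0 = 0) :
    mulLM zbar k ∈ Kmod I := by
  obtain ⟨hkH, hkO⟩ := Submodule.mem_inf.mp hk
  refine Submodule.mem_inf.mpr ⟨zbar_mem_H2 hkH hk0, ?_⟩
  rw [Submodule.mem_orthogonal]
  rintro u hu
  obtain ⟨gg, hgg, rfl⟩ := Submodule.mem_map.mp hu
  have horth := (Submodule.mem_orthogonal _ _).mp hkO
  have h0 := horth (mulLM I (mulLM zf gg)) (Submodule.mem_map_of_mem (zf_mem_H2 hgg))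
  rw [inner_L2] at h0 ⊢
  rw [← h0]
  apply integral_congr_ae
  filter_upwards [mulLM_coeFn I hI.memLinf gg, mulLM_coeFn zbar memLp_zbar k,
    mulLM_coeFn I hI.memLinf (mulLM zf gg), mulLM_coeFn zf memLp_zf gg] with x a b c d
  rw [a, b, c, d]
  show conj (I x * gg x) * (fourier (-1) x * k x) = conj (I x * (fourier 1 x * gg x)) * k x
  simp only [map_mul]
  rw [fourier_neg (n := 1)]
  ring

lemma near_main {I : Tc → ℂ} (hI : IsInner I) {f : L2} (hf : f ∈ H2)
    (hsub : mulSet (⇑f) (Kmod I) ≤ H2) (hf0 : cf f 0 ≠ 0) :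
    ∀ h ∈ mulSet (⇑f) (Kmod I), cf h 0 = 0 → Sstar h ∈ mulSet (⇑f) (Kmod I) := by
  intro h hh hh0
  obtain ⟨k, hk, hae⟩ := mem_mulSet.mp hh
  have hkH : k ∈ H2 := (Submodule.mem_inf.mp hk).1
  have hmul : cf h 0 = cf f 0 * cf k 0 :=
    cf_mul_head (N := 0) hkH (fun i hi => mem_H2_iff.mp hf i hi) hae
  have hk0 : cf k 0 = 0 := by
    rw [hh0] at hmul
    exact (mul_eq_zero.mp hmul.symm).resolve_left hf0
  have hkI : mulLM zbar k ∈ Kmod I := Kmod_shift hI hk hk0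
  rw [Sstar_eq_zbar (hsub hh) hh0]
  refine mem_mulSet.mpr ⟨mulLM zbar k, hkI, ?_⟩
  filter_upwards [mulLM_coeFn zbar memLp_zbar h, mulLM_coeFn zbar memLp_zbar k, hae]
    with x a b c
  rw [a, b, c]
  ring

def oneL2 : L2 := fourierLp 2 0

lemma coeFn_oneL2 : (⇑oneL2 : Tc → ℂ) =ᵐ[μ0] fun _ => (1:ℂ) :=
  (coeFn_fourierLp 2 0).trans (Filter.Eventually.of_forall fun _ => fourier_zero)

lemma cf_oneL2 (n : ℤ) : cf oneL2 n = if n = 0 then 1 else 0 := by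
  have hb : ∀ m : ℤ, (fourierBasis (T := 2 * Real.pi) m) = fourierLp 2 m := fun m =>
    congrFun coe_fourierBasis m
  have : cf oneL2 n = (inner ℂ (fourierBasis (T := 2 * Real.pi) n) (oneL2 : L2) : ℂ) := by
    rw [← fourierBasis.repr_apply_apply oneL2 n]; rfl
  rw [this, hb, oneL2]
  exact orthonormal_iff_ite.mp orthonormal_fourier n 0

lemma oneL2_mem_H2 : oneL2 ∈ H2 := mem_H2_iff.mpr fun n hn => by
  rw [cf_oneL2, if_neg (by omega)]

lemma integrable_L2 (u : L2) : MeasureTheory.Integrable (⇑u : Tc → ℂ) μ0 := by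
  have := MeasureTheory.Lp.memLp u
  exact (this.mono_exponent (by norm_num : (1:ℝ≥0∞) ≤ 2)).integrable le_rfl

lemma integral_eq_cf (u : L2) : ∫ x, u x ∂μ0 = cf u 0 := by
  rw [cf_eq_fourierCoeff]
  unfold fourierCoeff
  refine integral_congr_ae (Filter.Eventually.of_forall fun x => ?_)
  dsimp only
  rw [neg_zero, fourier_zero, one_smul]

def toL2 {g : Tc → ℂ} (hg : MemLp g ⊤ μ0) : L2 :=
  (hg.mono_exponent (le_top : (2:ℝ≥0∞) ≤ ⊤)).toLp g

lemma coeFn_toL2 {g : Tc → ℂ} (hg : MemLp g ⊤ μ0) : (⇑(toL2 hg) : Tc → ℂ) =ᵐ[μ0] g :=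
  MemLp.coeFn_toLp _

lemma integrable_conj_L2 (u : L2) : MeasureTheory.Integrable (fun x => conj (u x)) μ0 :=
  (integrable_L2 (conjL2 u)).congr (coeFn_conjL2 u)

variable {I : Tc → ℂ}

def IL2 (hI : IsInner I) : L2 := toL2 hI.memLinf

def cI (hI : IsInner I) : ℂ := cf (IL2 hI) 0

def w0 (hI : IsInner I) : L2 := oneL2 - conj (cI hI) • IL2 hI

lemma cf_IL2 (hI : IsInner I) (n : ℤ) : cf (IL2 hI) n = fourierCoeff I n :=
  cf_congr_ae (coeFn_toL2 _) n

lemma IL2_mem_H2 (hI : IsInner I) : IL2 hI ∈ H2 :=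
  mem_H2_iff.mpr fun n hn => by rw [cf_IL2]; exact hI.analytic n hn

lemma coeFn_IL2 (hI : IsInner I) : (⇑(IL2 hI) : Tc → ℂ) =ᵐ[μ0] I := coeFn_toL2 _

lemma coeFn_w0 (hI : IsInner I) :
    (⇑(w0 hI) : Tc → ℂ) =ᵐ[μ0] fun x => 1 - conj (cI hI) * I x := by
  rw [show w0 hI = oneL2 - conj (cI hI) • IL2 hI from rfl]
  filter_upwards [Lp.coeFn_sub oneL2 (conj (cI hI) • IL2 hI),
    Lp.coeFn_smul (conj (cI hI)) (IL2 hI), coeFn_oneL2, coeFn_IL2 hI] with x a b d e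
  rw [a, Pi.sub_apply, b, Pi.smul_apply, d, e, smul_eq_mul]

lemma cf_w0 (hI : IsInner I) (n : ℤ) :
    cf (w0 hI) n = (if n = 0 then 1 else 0) - conj (cI hI) * fourierCoeff I n := by
  rw [w0, cf_sub, cf_smul, cf_oneL2, cf_IL2]

lemma w0_mem_H2 (hI : IsInner I) : w0 hI ∈ H2 :=
  H2.sub_mem oneL2_mem_H2 (H2.smul_mem _ (IL2_mem_H2 hI))

lemma w0_orth_theta (hI : IsInner I) : w0 hI ∈ (thetaH2 I)ᗮ := by
  rw [Submodule.mem_orthogonal]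
  rintro u hu
  obtain ⟨gg, hgg, rfl⟩ := Submodule.mem_map.mp hu
  have hA : MeasureTheory.Integrable (fun x => conj ((mulLM I gg) x)) μ0 :=
    integrable_conj_L2 _
  have hB : MeasureTheory.Integrable (fun x => conj (cI hI) * conj (gg x)) μ0 :=
    (integrable_conj_L2 gg).const_mul _
  have h1 : (inner ℂ (mulLM I gg) (w0 hI) : ℂ)
      = ∫ x, (conj ((mulLM I gg) x) - conj (cI hI) * conj (gg x)) ∂μ0 := by
    rw [inner_L2]
    refine integral_congr_ae ?_
    filter_upwards [coeFn_w0 hI, mulLM_coeFn I hI.memLinf gg, hI.unimodular] with x a b hxu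
    rw [a, b]
    have hIx : conj (I x) * I x = 1 := by
      have := Complex.mul_conj (I x)
      rw [mul_comm] at this
      rw [this]
      rw [Complex.normSq_eq_norm_sq, hxu]
      norm_num
    simp only [map_mul]
    linear_combination (-(conj (cI hI) * conj ((gg : Tc → ℂ) x))) * hIx
  rw [h1, MeasureTheory.integral_sub hA hB, MeasureTheory.integral_const_mul,
    integral_conj, integral_conj, integral_eq_cf, integral_eq_cf]
  have hmul : cf (mulLM I gg) 0 = cf (IL2 hI) 0 * cf gg 0 := by
    refine cf_mul_head (N := 0) hgg (fun i hi => mem_H2_iff.mp (IL2_mem_H2 hI) i hi) ?_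
    filter_upwards [mulLM_coeFn I hI.memLinf gg, coeFn_IL2 hI] with x a b
    rw [a, b]
  rw [hmul]
  show conj (cI hI * cf gg 0) - conj (cI hI) * conj (cf gg 0) = 0
  simp only [map_mul]
  ring

lemma w0_orth_V (hI : IsInner I) : w0 hI ∈ (Kmod I ⊓ coeffGE 1)ᗮ := by
  rw [Submodule.mem_orthogonal]
  intro v hv
  obtain ⟨hvK, hv1⟩ := Submodule.mem_inf.mp hv
  obtain ⟨hvH, hvO⟩ := Submodule.mem_inf.mp hvK
  have hv0 : cf v 0 = 0 := mem_coeffGE.mp hv1 0 (by norm_num)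
  have hIc : MemLp (conjFun I) ⊤ μ0 := memLp_conj hI.memLinf
  have hBae : (fun x => conj ((mulLM (conjFun I) v) x)) =ᵐ[μ0]
      (fun x => conj (v x) * I x) := by
    filter_upwards [mulLM_coeFn (conjFun I) hIc v] with x a
    rw [a]
    show conj (conj (I x) * v x) = conj (v x) * I x
    simp only [map_mul, Complex.conj_conj]
    ring
  have hB : MeasureTheory.Integrable (fun x => conj (cI hI) * (conj (v x) * I x)) μ0 :=
    ((integrable_conj_L2 (mulLM (conjFun I) v)).congr hBae).const_mul _
  have hA : MeasureTheory.Integrable (fun x => conj (v x)) μ0 := integrable_conj_L2 v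
  have h1 : (inner ℂ v (w0 hI) : ℂ)
      = ∫ x, (conj (v x) - conj (cI hI) * (conj (v x) * I x)) ∂μ0 := by
    rw [inner_L2]
    refine integral_congr_ae ?_
    filter_upwards [coeFn_w0 hI] with x a
    rw [a]
    ring
  rw [h1, MeasureTheory.integral_sub hA hB, MeasureTheory.integral_const_mul]
  have h2 : ∫ x, conj (v x) ∂μ0 = 0 := by
    rw [integral_conj, integral_eq_cf, hv0, map_zero]
  have h3 : ∫ x, conj (v x) * I x ∂μ0 = 0 := by
    have horth := (Submodule.mem_orthogonal _ _).mp hvO (mulLM I oneL2)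
      (Submodule.mem_map_of_mem oneL2_mem_H2)
    rw [inner_L2] at horth
    have : ∫ x, conj ((mulLM I oneL2) x) * v x ∂μ0 = ∫ x, conj (I x) * v x ∂μ0 := by
      refine integral_congr_ae ?_
      filter_upwards [mulLM_coeFn I hI.memLinf oneL2, coeFn_oneL2] with x a b
      rw [a]
      show conj (I x * oneL2 x) * v x = conj (I x) * v x
      rw [b]
      simp
    rw [this] at horth
    calc ∫ x, conj (v x) * I x ∂μ0 = ∫ x, conj (conj (I x) * v x) ∂μ0 := by
          refine integral_congr_ae (Filter.Eventually.of_forall fun x => ?_)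
          simp only [map_mul, Complex.conj_conj]
          ring
      _ = conj (∫ x, conj (I x) * v x ∂μ0) := integral_conj
      _ = 0 := by rw [horth, map_zero]
  rw [h2, h3, mul_zero, sub_zero]

lemma w0_mem_Kmod (hI : IsInner I) : w0 hI ∈ Kmod I :=
  Submodule.mem_inf.mpr ⟨w0_mem_H2 hI, w0_orth_theta hI⟩

lemma w0_mem_W (hI : IsInner I) : w0 hI ∈ Kmod I ⊓ (Kmod I ⊓ coeffGE 1)ᗮ :=
  Submodule.mem_inf.mpr ⟨w0_mem_Kmod hI, w0_orth_V hI⟩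

lemma cf_w0_zero (hI : IsInner I) : cf (w0 hI) 0 = 1 - conj (cI hI) * cI hI := by
  rw [cf_w0, if_pos rfl, ← cf_IL2 hI 0]
  rfl

lemma mulSet_bot (w : Tc → ℂ) : mulSet w (⊥ : Submodule ℂ L2) = ⊥ := by
  refine le_antisymm ?_ bot_le
  intro h hh
  obtain ⟨k, hk, hae⟩ := mem_mulSet.mp hh
  rw [Submodule.mem_bot] at hk
  subst hk
  rw [Submodule.mem_bot]
  apply Lp.ext
  filter_upwards [hae, Lp.coeFn_zero ℂ 2 μ0] with x a b
  rw [a, b]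
  simp

lemma Kmod_eq_bot (hI : IsInner I) (hc : cf (w0 hI) 0 = 0) : Kmod I = ⊥ := by
  have hcc : conj (cI hI) * cI hI = 1 := by
    have := cf_w0_zero hI
    rw [hc] at this
    linear_combination this
  -- Parseval: all nonzero coefficients of I vanish
  have hnorm : ∀ z : ℂ, ‖z‖ = 1 → conj z * z = 1 := by
    intro z hz
    have := Complex.mul_conj z
    rw [mul_comm] at this
    rw [this, Complex.normSq_eq_norm_sq, hz]
    norm_num
  have hIone : (inner ℂ (IL2 hI) (IL2 hI) : ℂ) = 1 := by
    rw [inner_L2]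
    have : ∫ x, conj ((IL2 hI) x) * (IL2 hI) x ∂μ0 = ∫ _x, (1:ℂ) ∂μ0 := by
      refine integral_congr_ae ?_
      filter_upwards [coeFn_IL2 hI, hI.unimodular] with x a b
      rw [a]
      exact hnorm _ b
    rw [this]
    simp
  have key := fourierBasis.hasSum_inner_mul_inner (IL2 hI) (IL2 hI)
  rw [hIone] at key
  have key2 : HasSum (fun i : ℤ => ‖cf (IL2 hI) i‖ ^ 2) 1 := by
    have h2 : ∀ i : ℤ, (inner ℂ (IL2 hI) (fourierBasis i) : ℂ) * (inner ℂ (fourierBasis i) (IL2 hI) : ℂ)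
        = Complex.ofReal (‖cf (IL2 hI) i‖ ^ 2) := by
      intro i
      have hb : (inner ℂ (fourierBasis i) (IL2 hI) : ℂ) = cf (IL2 hI) i := by
        rw [← fourierBasis.repr_apply_apply (IL2 hI) i]; rfl
      have hb2 : (inner ℂ (IL2 hI) (fourierBasis i) : ℂ) = conj (cf (IL2 hI) i) :=
        (inner_conj_symm (IL2 hI) (fourierBasis i)).symm.trans (congrArg conj hb)
      rw [hb, hb2, mul_comm, Complex.mul_conj, Complex.normSq_eq_norm_sq]
    have := key.congr_fun fun i => (h2 i).symm
    have hre := this.mapL Complex.reCLM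
    simp only [Complex.reCLM_apply, Complex.ofReal_re] at hre
    simpa using hre
  have hr0 : ‖cf (IL2 hI) 0‖ ^ 2 = 1 := by
    have : ‖cI hI‖ * ‖cI hI‖ = 1 := by
      have := congrArg norm hcc
      simpa [norm_mul] using this
    have h01 : cf (IL2 hI) 0 = cI hI := rfl
    rw [h01]
    nlinarith
  have hri : ∀ i : ℤ, i ≠ 0 → cf (IL2 hI) i = 0 := by
    intro i hi
    have hsum := sum_le_hasSum ({0, i} : Finset ℤ)
      (fun j _ => by positivity) key2
    rw [Finset.sum_pair (Ne.symm hi)] at hsum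
    rw [hr0] at hsum
    have : ‖cf (IL2 hI) i‖ ^ 2 ≤ 0 := by linarith
    have hn : ‖cf (IL2 hI) i‖ = 0 := by nlinarith [norm_nonneg (cf (IL2 hI) i)]
    exact norm_eq_zero.mp hn
  have hIc : IL2 hI = cI hI • oneL2 := by
    have : IL2 hI - cI hI • oneL2 = 0 := by
      apply cf_eq_zero_all
      intro n
      rw [cf_sub, cf_smul, cf_oneL2]
      rcases eq_or_ne n 0 with rfl | hn
      · rw [if_pos rfl]
        show cI hI - cI hI * 1 = 0
        ring
      · rw [if_neg hn, hri n hn, mul_zero, sub_zero]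
    exact sub_eq_zero.mp this
  have hIconst : I =ᵐ[μ0] fun _ => cI hI := by
    have h1 : (⇑(IL2 hI) : Tc → ℂ) =ᵐ[μ0] fun _ => cI hI := by
      rw [hIc]
      filter_upwards [Lp.coeFn_smul (cI hI) oneL2, coeFn_oneL2] with x a b
      rw [a, Pi.smul_apply, b, smul_eq_mul, mul_one]
    exact (coeFn_IL2 hI).symm.trans h1
  -- now Kmod I = ⊥
  rw [Submodule.eq_bot_iff]
  intro v hv
  obtain ⟨hvH, hvO⟩ := Submodule.mem_inf.mp hv
  have horth := (Submodule.mem_orthogonal _ _).mp hvO (mulLM I v)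
    (Submodule.mem_map_of_mem hvH)
  rw [inner_L2] at horth
  have hstep : ∫ x, conj ((mulLM I v) x) * v x ∂μ0
      = conj (cI hI) * ∫ x, conj (v x) * v x ∂μ0 := by
    rw [← MeasureTheory.integral_const_mul]
    refine integral_congr_ae ?_
    filter_upwards [mulLM_coeFn I hI.memLinf v, hIconst] with x a b
    rw [a, b]
    simp only [map_mul]
    ring
  rw [hstep] at horth
  have hinner : (inner ℂ v v : ℂ) = 0 := by
    have hc0 : conj (cI hI) ≠ 0 := by
      intro h0
      rw [h0, zero_mul] at hcc
      exact zero_ne_one hcc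
    rw [inner_L2]
    exact (mul_eq_zero.mp horth).resolve_left hc0
  exact inner_self_eq_zero.mp hinner

lemma mulSet_coeFn_zero (U : Submodule ℂ L2) : mulSet (⇑(0 : L2)) U = ⊥ := by
  refine le_antisymm ?_ bot_le
  intro h hh
  obtain ⟨k, _hk, hae⟩ := mem_mulSet.mp hh
  rw [Submodule.mem_bot ℂ]
  apply Lp.ext
  filter_upwards [hae, Lp.coeFn_zero ℂ 2 μ0] with x a b
  rw [a, b]
  simp

lemma near_defect {I : Tc → ℂ} (hI : IsInner I) {f : L2}
    (hsub : mulSet (⇑f) (Kmod I) ≤ H2) :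
    ∀ h ∈ mulSet (⇑f) (Kmod I), cf h 0 = 0 →
      Sstar h ∈ mulSet (⇑f) (Kmod I) ⊔
        (mulSet (⇑f) (Kmod I ⊓ (Kmod I ⊓ coeffGE 1)ᗮ)).comap (mulLM zf) := by
  intro h hh hh0
  rcases eq_or_ne (cf (w0 hI) 0) 0 with hδ | hδ
  · have hbot := Kmod_eq_bot hI hδ
    have h0 : h = 0 := by
      have := hh
      rw [hbot, mulSet_bot] at this
      exact (Submodule.mem_bot ℂ).mp this
    rw [h0, map_zero]
    exact Submodule.zero_mem _
  · obtain ⟨k, hk, hae⟩ := mem_mulSet.mp hh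
    set s : ℂ := cf k 0 / cf (w0 hI) 0 with hs
    have hk1mem : k - s • w0 hI ∈ Kmod I :=
      Submodule.sub_mem _ hk (Submodule.smul_mem _ _ (w0_mem_Kmod hI))
    have hk10 : cf (k - s • w0 hI) 0 = 0 := by
      rw [cf_sub, cf_smul, hs]
      field_simp
      simp
    have hkI : mulLM zbar (k - s • w0 hI) ∈ Kmod I := Kmod_shift hI hk1mem hk10
    have hmemw : MemLp (fun x => 1 - conj (cI hI) * I x) ⊤ μ0 :=
      (memLp_const (1:ℂ)).sub (hI.memLinf.const_mul _)
    set fw : L2 := mulLM (fun x => 1 - conj (cI hI) * I x) f with hfw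
    have hfwcoe : (⇑fw : Tc → ℂ) =ᵐ[μ0] fun x => (1 - conj (cI hI) * I x) * f x :=
      mulLM_coeFn _ hmemw f
    refine Submodule.mem_sup.mpr
      ⟨mulLM zbar (h - s • fw), ?_, s • mulLM zbar fw, ?_, ?_⟩
    · refine mem_mulSet.mpr ⟨mulLM zbar (k - s • w0 hI), hkI, ?_⟩
      filter_upwards [mulLM_coeFn zbar memLp_zbar (h - s • fw),
        mulLM_coeFn zbar memLp_zbar (k - s • w0 hI),
        Lp.coeFn_sub h (s • fw), Lp.coeFn_smul s fw, hfwcoe, hae,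
        Lp.coeFn_sub k (s • w0 hI), Lp.coeFn_smul s (w0 hI), coeFn_w0 hI]
        with x a b c d e p q r t
      rw [a, b, c, Pi.sub_apply, d, Pi.smul_apply, e, p, q, Pi.sub_apply, r, Pi.smul_apply, t,
        smul_eq_mul, smul_eq_mul]
      show zbar x * (f x * k x - s * ((1 - conj (cI hI) * I x) * f x))
        = f x * (zbar x * (k x - s * (1 - conj (cI hI) * I x)))
      ring
    · rw [Submodule.mem_comap]
      have : mulLM zf (s • mulLM zbar fw) = s • fw := by
        rw [_root_.map_smul, mulLM_zf_zbar]
      rw [this]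
      refine mem_mulSet.mpr ⟨s • w0 hI,
        Submodule.smul_mem _ _ (w0_mem_W hI), ?_⟩
      filter_upwards [Lp.coeFn_smul s fw, hfwcoe, Lp.coeFn_smul s (w0 hI), coeFn_w0 hI]
        with x a b c d
      rw [a, Pi.smul_apply, b, c, Pi.smul_apply, d, smul_eq_mul, smul_eq_mul]
      ring
    · rw [Sstar_eq_zbar (hsub hh) hh0, map_sub, _root_.map_smul]
      abel

lemma exists_min_n {f : L2} (hf : f ∈ H2) (hne : f ≠ 0) (hf0 : cf f 0 = 0) :
    ∃ n : ℕ, 1 ≤ n ∧ cf f (n : ℤ) ≠ 0 ∧ ∀ j : ℤ, j < (n : ℤ) → cf f j = 0 := by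
  have hex : ∃ m : ℕ, cf f (m : ℤ) ≠ 0 := by
    by_contra hall
    push_neg at hall
    refine hne (cf_eq_zero_all fun j => ?_)
    rcases lt_or_ge j 0 with hj | hj
    · exact mem_H2_iff.mp hf j hj
    · have : ((j.toNat : ℕ) : ℤ) = j := Int.toNat_of_nonneg hj
      rw [← this]
      exact hall j.toNat
  classical
  refine ⟨Nat.find hex, ?_, Nat.find_spec hex, ?_⟩
  · rcases Nat.eq_zero_or_pos (Nat.find hex) with h0 | h0
    · exfalso
      have := Nat.find_spec hex
      rw [h0] at this
      exact this (by exact_mod_cast hf0)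
    · omega
  · intro j hj
    rcases lt_or_ge j 0 with hj' | hj'
    · exact mem_H2_iff.mp hf j hj'
    · have hco : ((j.toNat : ℕ) : ℤ) = j := Int.toNat_of_nonneg hj'
      have hlt : j.toNat < Nat.find hex := by omega
      have := Nat.find_min hex hlt
      push_neg at this
      rw [← hco]
      exact this

lemma finrank_defect_le {I : Tc → ℂ} (hI : IsInner I) {f : L2} (hf : f ∈ H2) :
    Module.finrank ℂ
      ↥((mulSet (⇑f) (Kmod I ⊓ (Kmod I ⊓ coeffGE 1)ᗮ)).comap (mulLM zf)) ≤ 1 := by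
  set W := Kmod I ⊓ (Kmod I ⊓ coeffGE 1)ᗮ with hW
  set E := (mulSet (⇑f) W).comap (mulLM zf) with hE
  rcases eq_or_ne f 0 with rfl | hne
  · have hWbot : mulSet (⇑(0:L2)) W = ⊥ := mulSet_coeFn_zero W
    have hEbot : E = ⊥ := by
      rw [hE, hWbot]
      refine le_antisymm ?_ bot_le
      intro x hx
      rw [Submodule.mem_comap, Submodule.mem_bot ℂ] at hx
      rw [Submodule.mem_bot ℂ]
      have := congrArg (mulLM zbar) hx
      rw [mulLM_zbar_zf, map_zero] at this
      exact this
    rw [hEbot]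
    simp
  · rcases eq_or_ne (cf f 0) 0 with hf0 | hf0
    case inl =>
      obtain ⟨n, _hn1, hn, hlt⟩ := exists_min_n hf hne hf0
      -- injective functional
      have hinj : Function.Injective
          ((coeffCLM ((n : ℤ) - 1)).toLinearMap.comp E.subtype) := by
        intro x y hxy
        have hzero : ∀ z : ↥E, cf (z : L2) ((n:ℤ) - 1) = 0 → (z : L2) = 0 := by
          intro z hz
          obtain ⟨w, hw, haew⟩ := mem_mulSet.mp (Submodule.mem_comap.mp z.2)
          have hwH : w ∈ H2 := (Submodule.mem_inf.mp (Submodule.mem_inf.mp hw).1).1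
          have hhead : cf (mulLM zf (z : L2)) (n:ℤ) = cf f (n:ℤ) * cf w 0 :=
            cf_mul_head (N := (n:ℤ)) hwH hlt haew
          rw [cf_mulLM_zf, hz] at hhead
          have hw0 : cf w 0 = 0 := by
            rcases mul_eq_zero.mp hhead.symm with h' | h'
            · exact absurd h' hn
            · exact h'
          have hwV : w ∈ Kmod I ⊓ coeffGE 1 := by
            refine Submodule.mem_inf.mpr ⟨(Submodule.mem_inf.mp hw).1, ?_⟩
            rw [mem_coeffGE]
            intro j hj
            rcases lt_or_ge j 0 with hj' | hj'
            · exact mem_H2_iff.mp hwH j hj'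
            · have : j = 0 := by omega
              rw [this]
              exact hw0
          have hworth := (Submodule.mem_orthogonal _ _).mp (Submodule.mem_inf.mp hw).2 w hwV
          have hwzero : w = 0 := inner_self_eq_zero.mp hworth
          have : mulLM zf (z : L2) = 0 := by
            apply Lp.ext
            filter_upwards [haew, Lp.coeFn_zero ℂ 2 μ0, hwzero ▸ Lp.coeFn_zero ℂ 2 μ0]
              with x a b c
            rw [a, b]
            rw [hwzero] at c ⊢
            rw [c]
            simp
          have := congrArg (mulLM zbar) this
          rw [mulLM_zbar_zf, map_zero] at this
          exact this
        have h1 : cf ((x : L2) - (y : L2)) ((n:ℤ) - 1) = 0 := by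
          have : cf (x : L2) ((n:ℤ)-1) = cf (y : L2) ((n:ℤ)-1) := hxy
          rw [cf_sub, this, sub_self]
        have h2 : ((x - y : ↥E) : L2) = 0 :=
          hzero (x - y) (by rw [Submodule.coe_sub]; exact h1)
        have h3 : x - y = 0 := Subtype.ext (h2.trans (ZeroMemClass.coe_zero E).symm)
        exact sub_eq_zero.mp h3
      have hle := LinearMap.finrank_le_finrank_of_injective hinj
      simpa using hle
    case inr =>
      -- same argument with n = 0
      have hinj : Function.Injective
          ((coeffCLM ((0 : ℤ) - 1)).toLinearMap.comp E.subtype) := by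
        intro x y hxy
        have hzero : ∀ z : ↥E, cf (z : L2) ((0:ℤ) - 1) = 0 → (z : L2) = 0 := by
          intro z hz
          obtain ⟨w, hw, haew⟩ := mem_mulSet.mp (Submodule.mem_comap.mp z.2)
          have hwH : w ∈ H2 := (Submodule.mem_inf.mp (Submodule.mem_inf.mp hw).1).1
          have hhead : cf (mulLM zf (z : L2)) (0:ℤ) = cf f (0:ℤ) * cf w 0 :=
            cf_mul_head (N := (0:ℤ)) hwH (fun i hi => mem_H2_iff.mp hf i hi) haew
          rw [cf_mulLM_zf, hz] at hhead
          have hw0 : cf w 0 = 0 := by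
            rcases mul_eq_zero.mp hhead.symm with h' | h'
            · exact absurd h' hf0
            · exact h'
          have hwV : w ∈ Kmod I ⊓ coeffGE 1 := by
            refine Submodule.mem_inf.mpr ⟨(Submodule.mem_inf.mp hw).1, ?_⟩
            rw [mem_coeffGE]
            intro j hj
            rcases lt_or_ge j 0 with hj' | hj'
            · exact mem_H2_iff.mp hwH j hj'
            · have : j = 0 := by omega
              rw [this]
              exact hw0
          have hworth := (Submodule.mem_orthogonal _ _).mp (Submodule.mem_inf.mp hw).2 w hwV
          have hwzero : w = 0 := inner_self_eq_zero.mp hworth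
          have : mulLM zf (z : L2) = 0 := by
            apply Lp.ext
            filter_upwards [haew, Lp.coeFn_zero ℂ 2 μ0, hwzero ▸ Lp.coeFn_zero ℂ 2 μ0]
              with x a b c
            rw [a, b]
            rw [hwzero] at c ⊢
            rw [c]
            simp
          have := congrArg (mulLM zbar) this
          rw [mulLM_zbar_zf, map_zero] at this
          exact this
        have h1 : cf ((x : L2) - (y : L2)) ((0:ℤ) - 1) = 0 := by
          have : cf (x : L2) ((0:ℤ)-1) = cf (y : L2) ((0:ℤ)-1) := hxy
          rw [cf_sub, this, sub_self]
        have h2 : ((x - y : ↥E) : L2) = 0 :=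
          hzero (x - y) (by rw [Submodule.coe_sub]; exact h1)
        have h3 : x - y = 0 := Subtype.ext (h2.trans (ZeroMemClass.coe_zero E).symm)
        exact sub_eq_zero.mp h3
      have hle := LinearMap.finrank_le_finrank_of_injective hinj
      simpa using hle

lemma part_one {I : Tc → ℂ} (hI : IsInner I) {f : L2} (hf : f ∈ H2)
    (hclosed : IsClosed ((mulSet (⇑f) (Kmod I) : Submodule ℂ L2) : Set L2))
    (hf0 : cf f 0 = 0) :
    ∃ n : ℕ, 1 ≤ n ∧ ∃ N : Submodule ℂ L2,
      IsClosed ((N : Submodule ℂ L2) : Set L2) ∧ N ≤ H2 ∧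
      (∀ h ∈ N, cf h 0 = 0 → Sstar h ∈ N) ∧
      mulSet (⇑f) (Kmod I) = N.map ((mulLM zf) ^ n) := by
  rcases eq_or_ne f 0 with rfl | hne
  · refine ⟨1, le_rfl, ⊥, ?_, bot_le, ?_, ?_⟩
    · rw [Submodule.bot_coe]
      exact isClosed_singleton
    · intro h hh _
      rw [Submodule.mem_bot ℂ] at hh
      rw [hh, map_zero]
      exact Submodule.zero_mem _
    · rw [mulSet_coeFn_zero, Submodule.map_bot]
  · obtain ⟨n, hn1, hn, hlt⟩ := exists_min_n hf hne hf0
    set g : L2 := (mulLM zbar ^ n) f with hg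
    have hgcoe : (⇑g : Tc → ℂ) =ᵐ[μ0] fun x => fourier (-(n:ℤ)) x * f x := coeFn_pow_zbar n f
    have hgcf : ∀ j : ℤ, cf g j = cf f (j + n) := fun j => cf_pow_zbar n f j
    have hgH : g ∈ H2 := mem_H2_iff.mpr fun m hm => by
      rw [hgcf]
      exact hlt _ (by omega)
    have hg0 : cf g 0 ≠ 0 := by
      rw [hgcf]
      simpa using hn
    set N : Submodule ℂ L2 := mulSet (⇑g) (Kmod I) with hN
    have hNsub : N ≤ H2 := by
      intro h' hh'
      obtain ⟨k, hk, hae⟩ := mem_mulSet.mp hh'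
      exact mem_H2_of_mul hgH (Submodule.mem_inf.mp hk).1 hae
    have hNM : ∀ u : L2, u ∈ N ↔ (mulLM zf ^ n) u ∈ mulSet (⇑f) (Kmod I) := by
      intro u
      constructor
      · rintro ⟨k, hk, hae⟩
        refine mem_mulSet.mpr ⟨k, hk, ?_⟩
        filter_upwards [coeFn_pow_zf n u, hae, hgcoe] with x a b c
        rw [a, b, c, ← mul_assoc, ← mul_assoc, ← fourier_add]
        have hidx : (n:ℤ) + -(n:ℤ) = 0 := by ring
        rw [hidx, fourier_zero, one_mul]
      · intro hm
        obtain ⟨k, hk, hae⟩ := mem_mulSet.mp hm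
        refine mem_mulSet.mpr ⟨k, hk, ?_⟩
        have hu : u = (mulLM zbar ^ n) ((mulLM zf ^ n) u) := (pow_zbar_zf n u).symm
        rw [hu]
        filter_upwards [coeFn_pow_zbar n ((mulLM zf ^ n) u), hae, hgcoe] with x a b c
        rw [a, b, c]
        ring
    have hNcomap : N = (mulSet (⇑f) (Kmod I)).comap (mulLM zf ^ n) := by
      ext u
      rw [Submodule.mem_comap]
      exact hNM u
    refine ⟨n, hn1, N, ?_, hNsub, ?_, ?_⟩
    · rw [hNcomap]
      have : ((Submodule.comap (mulLM zf ^ n) (mulSet (⇑f) (Kmod I)) : Submodule ℂ L2) : Set L2)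
          = (fun u : L2 => (mulLM zf ^ n) u) ⁻¹' (mulSet (⇑f) (Kmod I) : Set L2) := rfl
      rw [this]
      exact hclosed.preimage (continuous_pow_zf n)
    · exact near_main hI hgH hNsub hg0
    · refine le_antisymm ?_ ?_
      · intro h hh
        refine Submodule.mem_map.mpr ⟨(mulLM zbar ^ n) h, ?_, pow_zf_zbar n h⟩
        rw [hNM ((mulLM zbar ^ n) h), pow_zf_zbar n h]
        exact hh
      · rintro h hmem
        obtain ⟨y, hy, rfl⟩ := Submodule.mem_map.mp hmem
        exact (hNM y).mp hy

/-- **Theorem 4.4.**  Let `f ∈ H²` and let `I` be inner with `f·K_I` a closed subspace of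
`H²`.  If `f(0) ≠ 0` then `f·K_I` is nearly `S*`-invariant.  If `f(0) = 0` then `f·K_I` is
both (i) `zⁿ·N` for some `n ≥ 1` and some nearly `S*`-invariant subspace `N ⊆ H²`, and
(ii) nearly `S*`-invariant with the (at most one-dimensional) defect space
`(f/z)·(K_I ⊖ (K_I ∩ zH²))`. -/
theorem multiplier_times_model_space_dichotomy
    (f : L2) (hf : f ∈ H2) (I : Tc → ℂ) (hI : IsInner I)
    (hclosed : IsClosed ((mulSet (⇑f) (Kmod I) : Submodule ℂ L2) : Set L2))
    (hsub : mulSet (⇑f) (Kmod I) ≤ H2) :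
    (cf f 0 ≠ 0 →
      ∀ h ∈ mulSet (⇑f) (Kmod I), cf h 0 = 0 → Sstar h ∈ mulSet (⇑f) (Kmod I)) ∧
    (cf f 0 = 0 →
      -- (i) `f·K_I` is a power of `z` times a nearly `S*`-invariant subspace
      (∃ n : ℕ, 1 ≤ n ∧ ∃ N : Submodule ℂ L2,
          IsClosed ((N : Submodule ℂ L2) : Set L2) ∧ N ≤ H2 ∧
          (∀ h ∈ N, cf h 0 = 0 → Sstar h ∈ N) ∧
          mulSet (⇑f) (Kmod I) = N.map ((mulLM zf) ^ n)) ∧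
      -- (ii) `f·K_I` is nearly `S*`-invariant with defect space
      --      `(f/z)(K_I ⊖ (K_I ∩ zH²))`
      ((∀ h ∈ mulSet (⇑f) (Kmod I), cf h 0 = 0 →
          Sstar h ∈ mulSet (⇑f) (Kmod I) ⊔
            (mulSet (⇑f) (Kmod I ⊓ (Kmod I ⊓ coeffGE 1)ᗮ)).comap (mulLM zf)) ∧
        Module.finrank ℂ
          ↥((mulSet (⇑f) (Kmod I ⊓ (Kmod I ⊓ coeffGE 1)ᗮ)).comap (mulLM zf)) ≤ 1)) := by
  exact ⟨fun hf0 => near_main hI hf hsub hf0,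
    fun hf0 => ⟨part_one hI hf hclosed hf0,
      near_defect hI hsub, finrank_defect_le hI hf⟩⟩

end Paper
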